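/- Suppose e₁, e₂, k̃, l̃, w̃ : ℝ → ℝ are differentiable at t and satisfy de₁/dt = −a_m·e₁ + L·e₂, de₂/dt = −(a_m + L)·e₂ + b·l̃·r − b·k̃·x + b·(k̃ + k*)·θ·e₂ + b·w̃, dk̃/dt = sgn(b)·((1 − θ)·x + θ·(x − e₂))·γ₁·m₂·e₂, dl̃/dt = −sgn(b)·r·γ₂·m₂·e₂, dw̃/dt = −sgn(b)·γ₃·m₂·e₂ at time t (for given values L, x, r, θ at time t), where b·k* = a + a_m. If moreover there exist δ₂ > 0 and δ̂₂ := a_m·m₁ − δ₂ > 0 such that 0 < L and δ̂₂·((L + a_m − θ·(a + a_m))·m₂ − δ₂) − L²·m₁²/4 > 0, then the derivative of V(t) := ½·m₁·e₁(t)² + ½·m₂·e₂(t)² + (|b|/(2γ₁))·k̃(t)² + (|b|/(2γ₂))·l̃(t)² + (|b|/(2γ₃))·w̃(t)² at t satisfies dV/dt(t) ≤ −δ₂·(e₁(t)² + e₂(t)²). -/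

import Mathlib

/-- Lyapunov decrease (blended case).
With the blended error dynamics and adaptation laws holding at `t`,
`b·k* = a + a_m`, and the margin and gain conditions satisfied,
`dV/dt(t) ≤ −δ₂·(e₁(t)² + e₂(t)²)`. -/
theorem stmt_17
    (a aₘ b kstar m₁ m₂ γ₁ γ₂ γ₃ L x r θ δ₂ t : ℝ)
    (e₁ e₂ kt lt wt : ℝ → ℝ)
    (ham : 0 < aₘ) (hb : b ≠ 0)
    (hm₁ : 0 < m₁) (hm₂ : 0 < m₂)
    (hγ₁ : 0 < γ₁) (hγ₂ : 0 < γ₂) (hγ₃ : 0 < γ₃)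
    (hmatch : b * kstar = a + aₘ)
    (hd1 : HasDerivAt e₁ (-aₘ * e₁ t + L * e₂ t) t)
    (hd2 : HasDerivAt e₂
      (-(aₘ + L) * e₂ t + b * lt t * r - b * kt t * x
        + b * (kt t + kstar) * θ * e₂ t + b * wt t) t)
    (hd3 : HasDerivAt kt
      (Real.sign b * ((1 - θ) * x + θ * (x - e₂ t)) * γ₁ * m₂ * e₂ t) t)
    (hd4 : HasDerivAt lt (-(Real.sign b) * r * γ₂ * m₂ * e₂ t) t)
    (hd5 : HasDerivAt wt (-(Real.sign b) * γ₃ * m₂ * e₂ t) t)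
    (hδ₂ : 0 < δ₂)
    (hδhat₂ : 0 < aₘ * m₁ - δ₂)
    (hL0 : 0 < L)
    (hminor : 0 < (aₘ * m₁ - δ₂) * ((L + aₘ - θ * (a + aₘ)) * m₂ - δ₂)
        - L ^ 2 * m₁ ^ 2 / 4) :
    deriv (fun s => (1/2) * m₁ * (e₁ s) ^ 2 + (1/2) * m₂ * (e₂ s) ^ 2
        + (|b| / (2 * γ₁)) * (kt s) ^ 2 + (|b| / (2 * γ₂)) * (lt s) ^ 2
        + (|b| / (2 * γ₃)) * (wt s) ^ 2) t
      ≤ -δ₂ * ((e₁ t) ^ 2 + (e₂ t) ^ 2) := by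
  have hV : HasDerivAt (fun s => (1/2) * m₁ * (e₁ s) ^ 2 + (1/2) * m₂ * (e₂ s) ^ 2
        + (|b| / (2 * γ₁)) * (kt s) ^ 2 + (|b| / (2 * γ₂)) * (lt s) ^ 2
        + (|b| / (2 * γ₃)) * (wt s) ^ 2)
      ((1/2) * m₁ * (2 * e₁ t ^ 1 * (-aₘ * e₁ t + L * e₂ t))
        + (1/2) * m₂ * (2 * e₂ t ^ 1 * (-(aₘ + L) * e₂ t + b * lt t * r - b * kt t * x
            + b * (kt t + kstar) * θ * e₂ t + b * wt t))
        + (|b| / (2 * γ₁)) * (2 * kt t ^ 1 *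
            (Real.sign b * ((1 - θ) * x + θ * (x - e₂ t)) * γ₁ * m₂ * e₂ t))
        + (|b| / (2 * γ₂)) * (2 * lt t ^ 1 * (-(Real.sign b) * r * γ₂ * m₂ * e₂ t))
        + (|b| / (2 * γ₃)) * (2 * wt t ^ 1 * (-(Real.sign b) * γ₃ * m₂ * e₂ t))) t := by
    exact ((((((hd1.pow 2).const_mul _).add ((hd2.pow 2).const_mul _)).add
      ((hd3.pow 2).const_mul _)).add ((hd4.pow 2).const_mul _)).add
      ((hd5.pow 2).const_mul _))
  rw [hV.deriv]
  have hE : (1/2) * m₁ * (2 * e₁ t ^ 1 * (-aₘ * e₁ t + L * e₂ t))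
        + (1/2) * m₂ * (2 * e₂ t ^ 1 * (-(aₘ + L) * e₂ t + b * lt t * r - b * kt t * x
            + b * (kt t + kstar) * θ * e₂ t + b * wt t))
        + (|b| / (2 * γ₁)) * (2 * kt t ^ 1 *
            (Real.sign b * ((1 - θ) * x + θ * (x - e₂ t)) * γ₁ * m₂ * e₂ t))
        + (|b| / (2 * γ₂)) * (2 * lt t ^ 1 * (-(Real.sign b) * r * γ₂ * m₂ * e₂ t))
        + (|b| / (2 * γ₃)) * (2 * wt t ^ 1 * (-(Real.sign b) * γ₃ * m₂ * e₂ t))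
      = -aₘ * m₁ * e₁ t ^ 2 + L * m₁ * e₁ t * e₂ t
        - ((aₘ + L) * m₂ - θ * (a + aₘ) * m₂) * e₂ t ^ 2 := by
    rcases hb.lt_or_gt with hbn | hbp
    · rw [Real.sign_of_neg hbn, abs_of_neg hbn]
      field_simp
      linear_combination (θ * m₂ * e₂ t ^ 2) * hmatch
    · rw [Real.sign_of_pos hbp, abs_of_pos hbp]
      field_simp
      linear_combination (θ * m₂ * e₂ t ^ 2) * hmatch
  rw [hE]
  nlinarith [sq_nonneg (2 * (aₘ * m₁ - δ₂) * e₁ t - L * m₁ * e₂ t), hminor, hδhat₂,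
    mul_pos hδhat₂ hδ₂, sq_nonneg (e₂ t), sq_nonneg (e₁ t),
    mul_nonneg (le_of_lt hminor) (sq_nonneg (e₂ t))]
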